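/- arXiv:1911.00223 — 3 statements merged into one kernel-verified Lean document; each statement's English description precedes it below -/
import Mathlib

section
/- Let G be a finite connected simple graph with real edge weights that are pairwise distinct, let T be its (unique) minimum spanning tree, and let P be the Prim order of G with an arbitrary seed vertex. Let e_max = (v_i, v_j) be the edge of T of maximum weight, and set P(e_max) = max(P(v_i), P(v_j)). Then deleting e_max from T leaves exactly two connected components T_L and T_R, and their vertex sets are V_L = {v ∈ V : P(v) < P(e_max)} and V_R = {v ∈ V : P(v) ≥ P(e_max)}. -/
open SimpleGraph

variable {V : Type*}

/-- `P` is a Prim order of the graph `H` restricted to the vertex set `S`, with seed `v₀`: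
`P` maps `S` bijectively onto `{1, …, |S|}`, `P v₀ = 1`, and each vertex other than the seed
is joined to an earlier vertex by an edge of minimum weight among all edges of `H` (within `S`)
from the earlier vertices to the later ones. -/
def IsPrimOrderOn (H : SimpleGraph V) (w : Sym2 V → ℝ)
    (S : Set V) (v₀ : V) (P : V → ℕ) : Prop :=
  v₀ ∈ S ∧ P v₀ = 1 ∧ Set.BijOn P S (Set.Icc 1 S.ncard) ∧
    ∀ v ∈ S, P v ≠ 1 →
      ∃ u ∈ S, P u < P v ∧ H.Adj u v ∧
        ∀ x ∈ S, ∀ y ∈ S, P x < P v → P v ≤ P y → H.Adj x y →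
          w s(u, v) ≤ w s(x, y)

/-- Total edge weight of a graph on a finite vertex type. -/
noncomputable def totalWeight [Fintype V] (H : SimpleGraph V) (w : Sym2 V → ℝ) : ℝ :=
  ∑ e ∈ H.edgeSet.toFinite.toFinset, w e

/-- `H` is a tree on the vertex set `S`: all its edges lie within `S`, any two vertices of `S`
are joined by a path, and `H` is acyclic. -/
def IsTreeOn (H : SimpleGraph V) (S : Set V) : Prop :=
  (∀ e ∈ H.edgeSet, ∀ v ∈ e, v ∈ S) ∧ (∀ u ∈ S, ∀ v ∈ S, H.Reachable u v) ∧ H.IsAcyclic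

/-- `T` is a minimum spanning tree of `G` on the vertex set `S`. -/
def IsMSTOn [Fintype V] (G : SimpleGraph V) (w : Sym2 V → ℝ) (S : Set V)
    (T : SimpleGraph V) : Prop :=
  T ≤ G ∧ IsTreeOn T S ∧
    ∀ T' : SimpleGraph V, T' ≤ G → IsTreeOn T' S → totalWeight T w ≤ totalWeight T' w

/-- Restriction of a graph to the edges with both endpoints in `S`. -/
def restrictTo (H : SimpleGraph V) (S : Set V) : SimpleGraph V where
  Adj a b := H.Adj a b ∧ a ∈ S ∧ b ∈ S
  symm := ⟨fun a b ⟨h, ha, hb⟩ => ⟨h.symm, hb, ha⟩⟩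
  loopless := ⟨fun a ⟨h, _, _⟩ => H.irrefl h⟩

/-- Prim order of an edge: the larger of the Prim orders of its endpoints. -/
def edgeOrder (P : V → ℕ) : Sym2 V → ℕ :=
  Sym2.lift ⟨fun u v => max (P u) (P v), fun u v => max_comm _ _⟩


section AuxLemmas
variable {K T : SimpleGraph V}

lemma aux_reach_sup_edge {u v : V} (h : ¬K.Reachable u v) {a b : V}
    (hr : (K ⊔ edge u v).Reachable a b) :
    K.Reachable a b ∨ (K.Reachable a u ∧ K.Reachable v b) ∨
      (K.Reachable a v ∧ K.Reachable u b) := by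
  obtain ⟨p⟩ := hr
  induction p with
  | nil => exact Or.inl (Reachable.refl _)
  | @cons a c b hadj p ih =>
    rcases hadj with hK | hE
    · rcases ih with h1 | ⟨h1, h2⟩ | ⟨h1, h2⟩
      · exact Or.inl (hK.reachable.trans h1)
      · exact Or.inr (Or.inl ⟨hK.reachable.trans h1, h2⟩)
      · exact Or.inr (Or.inr ⟨hK.reachable.trans h1, h2⟩)
    · rw [edge_adj] at hE
      obtain ⟨⟨rfl, rfl⟩ | ⟨rfl, rfl⟩, hne⟩ := hE
      · rcases ih with h1 | ⟨h1, h2⟩ | ⟨h1, h2⟩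
        · exact Or.inr (Or.inl ⟨Reachable.refl _, h1⟩)
        · exact absurd h1.symm h
        · exact Or.inl h2
      · rcases ih with h1 | ⟨h1, h2⟩ | ⟨h1, h2⟩
        · exact Or.inr (Or.inr ⟨Reachable.refl _, h1⟩)
        · exact Or.inl h2
        · exact absurd h1 h

lemma aux_edge_decomp {x y : V} (hxy : T.Adj x y) :
    T = T.deleteEdges {s(x, y)} ⊔ edge x y := by
  ext a b
  simp only [sup_adj, deleteEdges_adj, Set.mem_singleton_iff, edge_adj, Sym2.eq_iff]
  constructor
  · intro h
    by_cases hc : a = x ∧ b = y ∨ a = y ∧ b = x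
    · exact Or.inr ⟨hc, h.ne⟩
    · exact Or.inl ⟨h, hc⟩
  · rintro (⟨h, -⟩ | ⟨⟨rfl, rfl⟩ | ⟨rfl, rfl⟩, -⟩)
    · exact h
    · exact hxy
    · exact hxy.symm

lemma aux_not_reach_delete (hac : T.IsAcyclic) {x y : V} (hxy : T.Adj x y) :
    ¬(T.deleteEdges {s(x, y)}).Reachable x y :=
  ((isAcyclic_iff_forall_adj_isBridge.mp hac) hxy)

lemma aux_reach_delete_cases (hac : T.IsAcyclic) {x y : V} (hxy : T.Adj x y) {a b : V}
    (hr : T.Reachable a b) :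
    (T.deleteEdges {s(x, y)}).Reachable a b ∨
      ((T.deleteEdges {s(x, y)}).Reachable a x ∧ (T.deleteEdges {s(x, y)}).Reachable y b) ∨
      ((T.deleteEdges {s(x, y)}).Reachable a y ∧ (T.deleteEdges {s(x, y)}).Reachable x b) := by
  rw [aux_edge_decomp hxy] at hr
  exact aux_reach_sup_edge (aux_not_reach_delete hac hxy) hr

lemma aux_acyclic_mono (h : K ≤ T) (hac : T.IsAcyclic) : K.IsAcyclic := by
  intro v c hc
  exact hac (c.transfer T (fun e he => edgeSet_mono h (c.edges_subset_edgeSet he)))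
    (hc.transfer _)

lemma aux_acyclic_sup_edge (hac : K.IsAcyclic) {u v : V} (h : ¬K.Reachable u v) :
    (K ⊔ edge u v).IsAcyclic := by
  have hnadj : ¬K.Adj u v := fun ha => h ha.reachable
  rw [isAcyclic_iff_forall_adj_isBridge]
  rintro a b hab
  rw [isBridge_iff]
  show ¬((K ⊔ edge u v) \ fromEdgeSet {s(a, b)}).Reachable a b
  by_cases hcase : s(a, b) = s(u, v)
  · have hKeq : (K ⊔ edge u v) \ fromEdgeSet {s(a, b)} = K := by
      ext p q
      rw [hcase]
      simp only [sdiff_adj, sup_adj, fromEdgeSet_adj, Set.mem_singleton_iff, edge_adj,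
        Sym2.eq_iff]
      constructor
      · rintro ⟨hK | ⟨hor, hne'⟩, hn⟩
        · exact hK
        · exact absurd ⟨hor, hne'⟩ hn
      · intro hK
        refine ⟨Or.inl hK, ?_⟩
        rintro ⟨⟨rfl, rfl⟩ | ⟨rfl, rfl⟩, -⟩
        · exact hnadj hK
        · exact hnadj hK.symm
    rw [hKeq]
    rcases Sym2.eq_iff.mp hcase with ⟨rfl, rfl⟩ | ⟨rfl, rfl⟩
    · exact h
    · exact fun hr => h hr.symm
  · have haK : K.Adj a b := by
      rcases hab with h1 | h1
      · exact h1
      · rw [edge_adj] at h1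
        exfalso
        rcases h1 with ⟨⟨rfl, rfl⟩ | ⟨rfl, rfl⟩, -⟩
        · exact hcase rfl
        · exact hcase (Sym2.eq_swap)
    have hbr := (isAcyclic_iff_forall_adj_isBridge.mp hac) haK
    have hdecomp : (K ⊔ edge u v) \ fromEdgeSet {s(a, b)} =
        (K \ fromEdgeSet {s(a, b)}) ⊔ edge u v := by
      ext p q
      simp only [sdiff_adj, sup_adj, fromEdgeSet_adj, Set.mem_singleton_iff, edge_adj]
      constructor
      · rintro ⟨hK | hE, hn⟩
        · exact Or.inl ⟨hK, hn⟩
        · exact Or.inr hE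
      · rintro (⟨hK, hn⟩ | hE)
        · exact ⟨Or.inl hK, hn⟩
        · refine ⟨Or.inr hE, ?_⟩
          rintro ⟨hpq, -⟩
          rcases hE with ⟨⟨rfl, rfl⟩ | ⟨rfl, rfl⟩, -⟩
          · exact hcase hpq.symm
          · exact hcase (Sym2.eq_swap.trans hpq).symm
    rw [hdecomp]
    intro hr
    have hKuv : ¬(K \ fromEdgeSet {s(a, b)}).Reachable u v :=
      fun hh => h (hh.mono sdiff_le)
    rcases aux_reach_sup_edge hKuv hr with h1 | ⟨h1, h2⟩ | ⟨h1, h2⟩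
    · exact hbr h1
    · exact h (((h1.mono sdiff_le).symm.trans haK.reachable).trans (h2.mono sdiff_le).symm)
    · exact h ((((h1.mono sdiff_le).symm.trans haK.reachable).trans (h2.mono sdiff_le).symm).symm)

lemma aux_walk_cross {H : SimpleGraph V} {C : Set V} :
    ∀ {a b : V} (p : H.Walk a b), a ∈ C → b ∉ C →
    ∃ x y, x ∈ C ∧ y ∉ C ∧ H.Adj x y ∧ s(x, y) ∈ p.edges := by
  intro a b p
  induction p with
  | nil => intro ha hb; exact absurd ha hb
  | @cons a c b hadj p ih =>
    intro ha hb
    by_cases hc : c ∈ C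
    · obtain ⟨x, y, h1, h2, h3, h4⟩ := ih hc hb
      exact ⟨x, y, h1, h2, h3, by simp [Walk.edges_cons, h4]⟩
    · exact ⟨a, c, ha, hc, hadj, by simp [Walk.edges_cons]⟩

lemma aux_path_edge_sep (hac : T.IsAcyclic) {a b : V} {p : T.Walk a b} (hp : p.IsPath)
    {f : Sym2 V} (hf : f ∈ p.edges) : ¬(T.deleteEdges {f}).Reachable a b := by
  classical
  rintro ⟨q⟩
  have hDle : T.deleteEdges {f} ≤ T := deleteEdges_le _
  have htr : ∀ e ∈ (q.toPath : (T.deleteEdges {f}).Walk a b).edges, e ∈ T.edgeSet :=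
    fun e he => edgeSet_mono hDle ((q.toPath : (T.deleteEdges {f}).Walk a b).edges_subset_edgeSet he)
  have hpath : ((q.toPath : (T.deleteEdges {f}).Walk a b).transfer T htr).IsPath :=
    (q.toPath).2.transfer htr
  have hequ := hac.path_unique ⟨p, hp⟩ ⟨_, hpath⟩
  have hfmem : f ∈ ((q.toPath : (T.deleteEdges {f}).Walk a b).transfer T htr).edges := by
    have hpe : p = (q.toPath : (T.deleteEdges {f}).Walk a b).transfer T htr :=
      congrArg Subtype.val hequ
    rwa [hpe] at hf
  rw [Walk.edges_transfer] at hfmem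
  have hin : f ∈ (T.deleteEdges {f}).edgeSet :=
    (q.toPath : (T.deleteEdges {f}).Walk a b).edges_subset_edgeSet hfmem
  rw [edgeSet_deleteEdges] at hin
  exact hin.2 rfl
lemma aux_cut_mst [Fintype V] {G T : SimpleGraph V} {w : Sym2 V → ℝ}
    (hdistinct : Set.InjOn w G.edgeSet) (hT : IsMSTOn G w Set.univ T)
    {P : V → ℕ} {u v : V} (huv : G.Adj u v) (hlt : P u < P v)
    (hmin : ∀ x y : V, P x < P v → P v ≤ P y → G.Adj x y → w s(u, v) ≤ w s(x, y)) :
    s(u, v) ∈ T.edgeSet := by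
  classical
  obtain ⟨hTG, ⟨-, hTreach, hTac⟩, hTmin⟩ := hT
  by_contra he
  obtain ⟨p0⟩ := hTreach u trivial v trivial
  obtain ⟨x, y, hx, hy, hxy, hfe⟩ :=
    aux_walk_cross (C := {z | P z < P v}) (p0.toPath : T.Walk u v) hlt (by simp)
  have hx' : P x < P v := hx
  have hy' : P v ≤ P y := not_lt.mp hy
  have hfT : s(x, y) ∈ T.edgeSet := hxy
  have hfG : s(x, y) ∈ G.edgeSet := hTG hxy
  have heG : s(u, v) ∈ G.edgeSet := huv
  have hne : s(u, v) ≠ s(x, y) := fun hh => he (by rw [hh]; exact hfT)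
  have hwlt : w s(u, v) < w s(x, y) :=
    lt_of_le_of_ne (hmin x y hx' hy' (hTG hxy)) (fun hw => hne (hdistinct heG hfG hw))
  set D := T.deleteEdges {s(x, y)} with hDdef
  have hsepxy : ¬D.Reachable x y := aux_not_reach_delete hTac hxy
  have hsep : ¬D.Reachable u v := aux_path_edge_sep hTac (p0.toPath).2 hfe
  have hreach2 : ∀ a : V, D.Reachable a x ∨ D.Reachable a y := by
    intro a
    rcases aux_reach_delete_cases hTac hxy (hTreach a trivial x trivial) with
      h1 | ⟨h1, h2⟩ | ⟨h1, h2⟩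
    · exact Or.inl h1
    · exact Or.inl h1
    · exact Or.inr h1
  set T' := D ⊔ edge u v with hT'def
  have hDle : D ≤ T := deleteEdges_le _
  have hadj' : T'.Adj u v := by
    refine Or.inr ?_
    rw [edge_adj]
    exact ⟨Or.inl ⟨rfl, rfl⟩, huv.ne⟩
  have hxy' : T'.Reachable x y := by
    rcases hreach2 u with h1 | h1 <;> rcases hreach2 v with h2 | h2
    · exact absurd (h1.trans h2.symm) hsep
    · exact ((h1.mono le_sup_left).symm.trans hadj'.reachable).trans (h2.mono le_sup_left)
    · exact ((h2.mono (le_sup_left : D ≤ T')).symm.trans hadj'.reachable.symm).trans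
        (h1.mono le_sup_left)
    · exact absurd (h1.trans h2.symm) hsep
  have hconn' : ∀ a ∈ (Set.univ : Set V), ∀ b ∈ (Set.univ : Set V), T'.Reachable a b := by
    intro a _ b _
    have hax : T'.Reachable a x ∨ T'.Reachable a y :=
      (hreach2 a).imp (Reachable.mono le_sup_left) (Reachable.mono le_sup_left)
    have hbx : T'.Reachable b x ∨ T'.Reachable b y :=
      (hreach2 b).imp (Reachable.mono le_sup_left) (Reachable.mono le_sup_left)
    rcases hax with h1 | h1 <;> rcases hbx with h2 | h2
    · exact h1.trans h2.symm
    · exact h1.trans (hxy'.trans h2.symm)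
    · exact h1.trans (hxy'.symm.trans h2.symm)
    · exact h1.trans h2.symm
  have hac' : T'.IsAcyclic := aux_acyclic_sup_edge (aux_acyclic_mono hDle hTac) hsep
  have hT'G : T' ≤ G := by
    refine sup_le (hDle.trans hTG) ?_
    intro a b hab
    rw [edge_adj] at hab
    rcases hab with ⟨⟨rfl, rfl⟩ | ⟨rfl, rfl⟩, -⟩
    · exact huv
    · exact huv.symm
  have htree' : IsTreeOn T' Set.univ := ⟨fun _ _ z _ => trivial, hconn', hac'⟩
  have hset : T'.edgeSet = (T.edgeSet \ {s(x, y)}) ∪ {s(u, v)} := by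
    rw [hT'def, edgeSet_sup, hDdef, edgeSet_deleteEdges, edge_edgeSet_of_ne huv.ne]
  have hfin : T'.edgeSet.toFinite.toFinset =
      insert s(u, v) (T.edgeSet.toFinite.toFinset.erase s(x, y)) := by
    ext g
    simp only [Set.Finite.mem_toFinset, hset, Set.mem_union, Set.mem_diff,
      Set.mem_singleton_iff, Finset.mem_insert, Finset.mem_erase]
    tauto
  have hnotmem : s(u, v) ∉ T.edgeSet.toFinite.toFinset.erase s(x, y) := by
    rw [Finset.mem_erase, Set.Finite.mem_toFinset]
    exact fun hh => he hh.2
  have h1 : totalWeight T' w =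
      w s(u, v) + ∑ g ∈ T.edgeSet.toFinite.toFinset.erase s(x, y), w g := by
    rw [totalWeight, hfin, Finset.sum_insert hnotmem]
  have h2 : (∑ g ∈ T.edgeSet.toFinite.toFinset.erase s(x, y), w g) + w s(x, y) =
      totalWeight T w :=
    Finset.sum_erase_add _ _ (Set.Finite.mem_toFinset _ |>.mpr hfT)
  have hcontra := hTmin T' hT'G htree'
  rw [h1] at hcontra
  linarith
lemma edgeOrder_mk (P : V → ℕ) (a b : V) : edgeOrder P s(a, b) = max (P a) (P b) := rfl

lemma main_aux [Fintype V] (G T : SimpleGraph V) (w : Sym2 V → ℝ)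
    (hconn : G.Connected) (hdistinct : Set.InjOn w G.edgeSet)
    (hT : IsMSTOn G w Set.univ T) (v₀ : V) (P : V → ℕ)
    (hP : IsPrimOrderOn G w Set.univ v₀ P)
    (vi vj : V) (hmem : s(vi, vj) ∈ T.edgeSet)
    (hmax : ∀ e ∈ T.edgeSet, w e ≤ w s(vi, vj)) (hlt : P vi < P vj) :
    ∃ cL cR : (T.deleteEdges {s(vi, vj)}).ConnectedComponent,
      cL ≠ cR ∧ (∀ c, c = cL ∨ c = cR) ∧
      cL.supp = {v | P v < edgeOrder P s(vi, vj)} ∧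
      cR.supp = {v | edgeOrder P s(vi, vj) ≤ P v} := by
  classical
  obtain ⟨-, hP1, hPbij, hPmin⟩ := hP
  have hPinj : Function.Injective P := fun a b hab => hPbij.injOn trivial trivial hab
  have hTadj : T.Adj vi vj := hmem
  have hTG : T ≤ G := hT.1
  obtain ⟨-, hTreach, hTac⟩ := hT.2.1
  -- Prim edges are in T
  have key : ∀ v : V, ∃ u : V, P v ≠ 1 →
      P u < P v ∧ G.Adj u v ∧ s(u, v) ∈ T.edgeSet ∧
        ∀ x y : V, P x < P v → P v ≤ P y → G.Adj x y → w s(u, v) ≤ w s(x, y) := by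
    intro v
    by_cases hv : P v = 1
    · exact ⟨v, fun h => absurd hv h⟩
    · obtain ⟨u, -, hu1, hu2, hu3⟩ := hPmin v trivial hv
      have hmin' : ∀ x y : V, P x < P v → P v ≤ P y → G.Adj x y → w s(u, v) ≤ w s(x, y) :=
        fun x y h1 h2 h3 => hu3 x trivial y trivial h1 h2 h3
      exact ⟨u, fun _ => ⟨hu1, hu2, aux_cut_mst hdistinct hT hu2 hu1 hmin', hmin'⟩⟩
  choose uf huf using key
  have hu1 : ∀ v, P v ≠ 1 → P (uf v) < P v := fun v h => (huf v h).1
  have hu3 : ∀ v, P v ≠ 1 → s(uf v, v) ∈ T.edgeSet := fun v h => (huf v h).2.2.1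
  have hu4 : ∀ v, P v ≠ 1 → ∀ x y : V, P x < P v → P v ≤ P y → G.Adj x y →
      w s(uf v, v) ≤ w s(x, y) := fun v h => (huf v h).2.2.2
  have hPv₀ : ∀ v, P v = 1 ↔ v = v₀ :=
    fun v => ⟨fun h => hPinj (h.trans hP1.symm), fun h => h ▸ hP1⟩
  have hPge1 : ∀ v : V, 1 ≤ P v := by
    intro v
    have := hPbij.mapsTo (Set.mem_univ v)
    rw [Set.mem_Icc] at this
    exact this.1
  -- cardinality: the Prim edges exhaust T
  haveI : Nonempty V := hconn.nonempty
  set A : Set V := {v : V | P v ≠ 1} with hAdef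
  have hAeq : A = Set.univ \ {v₀} := by
    ext v
    simp [hAdef, hPv₀ v]
  have hAcard : A.ncard = Fintype.card V - 1 := by
    rw [hAeq, Set.ncard_diff_singleton_of_mem (Set.mem_univ v₀), Set.ncard_univ, Nat.card_eq_fintype_card]
  have hinjF : Set.InjOn (fun v => s(uf v, v)) A := by
    intro a ha b hb hab
    have hor : edgeOrder P s(uf a, a) = edgeOrder P s(uf b, b) := by
      simp only at hab
      rw [hab]
    rw [edgeOrder_mk, edgeOrder_mk, max_eq_right (hu1 a ha).le,
      max_eq_right (hu1 b hb).le] at hor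
    exact hPinj hor
  have himsub : (fun v => s(uf v, v)) '' A ⊆ T.edgeSet := by
    rintro g ⟨v, hv, rfl⟩
    exact hu3 v hv
  have hTtree : T.IsTree := ⟨⟨fun a b => hTreach a trivial b trivial⟩, hTac⟩
  have hTcard : T.edgeSet.ncard = Fintype.card V - 1 := by
    haveI := (T.edgeSet.toFinite).fintype
    have h := hTtree.card_edgeFinset
    have h2 : T.edgeSet.ncard = T.edgeFinset.card := Set.ncard_eq_toFinset_card' _
    omega
  have himcard : ((fun v => s(uf v, v)) '' A).ncard = Fintype.card V - 1 := by
    rw [Set.ncard_image_of_injOn hinjF, hAcard]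
  have hedges : (fun v => s(uf v, v)) '' A = T.edgeSet :=
    Set.eq_of_subset_of_ncard_le himsub (by rw [himcard, hTcard]) (T.edgeSet.toFinite)
  -- identify the max edge with the Prim edge at step P vj
  have hvj1 : P vj ≠ 1 := by have := hPge1 vi; omega
  have hedgeO : ∀ a b : V, s(a, b) = s(vi, vj) → max (P a) (P b) = P vj := by
    intro a b hsy
    have := congrArg (edgeOrder P) hsy
    rwa [edgeOrder_mk, edgeOrder_mk, max_eq_right hlt.le] at this
  have hvieq : uf vj = vi := by
    have hmem' : s(vi, vj) ∈ (fun v => s(uf v, v)) '' A := by rw [hedges]; exact hmem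
    obtain ⟨v, hv, hveq⟩ := hmem'
    simp only at hveq
    have hPv : P v = P vj := by
      have h5 := hedgeO _ _ hveq
      rwa [max_eq_right (hu1 v hv).le] at h5
    have hv_eq : v = vj := hPinj hPv
    subst hv_eq
    rcases Sym2.eq_iff.mp hveq with ⟨h1, -⟩ | ⟨h1, h2⟩
    · exact h1
    · exact absurd (hu1 v hv) (by rw [h1]; exact lt_irrefl _)
  -- uniqueness of the crossing edge
  have hcrossuniq : ∀ x y : V, T.Adj x y → P x < P vj → P vj ≤ P y → s(x, y) = s(vi, vj) := by
    intro x y hadj h1 h2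
    have hge : w s(vi, vj) ≤ w s(x, y) := by
      have := hu4 vj hvj1 x y h1 h2 (hTG hadj)
      rwa [hvieq] at this
    have hle : w s(x, y) ≤ w s(vi, vj) := hmax _ hadj
    exact hdistinct (hTG hadj) (hTG hTadj) (le_antisymm hle hge)
  set D := T.deleteEdges {s(vi, vj)} with hDdef
  have hDadj : ∀ a b : V, T.Adj a b → s(a, b) ≠ s(vi, vj) → D.Adj a b := by
    intro a b h1 h2
    rw [hDdef, deleteEdges_adj]
    exact ⟨h1, by simpa using h2⟩
  have hDle : D ≤ T := deleteEdges_le _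
  have hreachL : ∀ k, ∀ v : V, P v = k → P v < P vj → D.Reachable v v₀ := by
    intro k
    induction k using Nat.strong_induction_on with
    | _ k ih =>
      intro v hk hvm
      by_cases h1 : P v = 1
      · rw [(hPv₀ v).mp h1]
      · have h2 := hu1 v h1
        have hne2 : s(uf v, v) ≠ s(vi, vj) := by
          intro hcon
          have h5 := hedgeO _ _ hcon
          rw [max_eq_right h2.le] at h5
          omega
        exact ((hDadj _ _ (hu3 v h1) hne2).symm.reachable).trans
          (ih (P (uf v)) (by omega) (uf v) rfl (by omega))
  have hreachR : ∀ k, ∀ v : V, P v = k → P vj ≤ P v → D.Reachable v vj := by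
    intro k
    induction k using Nat.strong_induction_on with
    | _ k ih =>
      intro v hk hvm
      by_cases heq : P v = P vj
      · rw [hPinj heq]
      · have hlt2 : P vj < P v := lt_of_le_of_ne hvm (fun h => heq h.symm)
        have h1 : P v ≠ 1 := by have := hPge1 vi; omega
        have h2 := hu1 v h1
        have hge : P vj ≤ P (uf v) := by
          by_contra hcon
          push_neg at hcon
          have h5 := hedgeO _ _ (hcrossuniq (uf v) v (hu3 v h1) (by omega) (by omega))
          rw [max_eq_right h2.le] at h5
          omega
        have hne2 : s(uf v, v) ≠ s(vi, vj) := by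
          intro hcon
          have h5 := hedgeO _ _ hcon
          rw [max_eq_right h2.le] at h5
          omega
        exact ((hDadj _ _ (hu3 v h1) hne2).symm.reachable).trans
          (ih (P (uf v)) (by omega) (uf v) rfl hge)
  have hnocross : ∀ a b : V, D.Reachable a b → P a < P vj → P vj ≤ P b → False := by
    rintro a b ⟨p⟩ ha hb
    obtain ⟨x, y, hx, hy, hxy, -⟩ :=
      aux_walk_cross (C := {z | P z < P vj}) p ha (by simpa using hb)
    obtain ⟨hTxy, hnot⟩ := (deleteEdges_adj).mp hxy
    exact hnot (by rw [hcrossuniq x y hTxy hx (not_lt.mp hy)]; exact rfl)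
  have hsep : ¬D.Reachable vi vj := aux_not_reach_delete hTac hTadj
  have hm : edgeOrder P s(vi, vj) = P vj := by
    rw [edgeOrder_mk]
    exact max_eq_right hlt.le
  refine ⟨D.connectedComponentMk vi, D.connectedComponentMk vj, ?_, ?_, ?_, ?_⟩
  · intro hcc
    exact hsep (ConnectedComponent.exact hcc)
  · intro c
    obtain ⟨v, rfl⟩ := c.exists_rep
    by_cases hv : P v < P vj
    · exact Or.inl (ConnectedComponent.sound
        ((hreachL _ v rfl hv).trans (hreachL _ vi rfl hlt).symm))
    · exact Or.inr (ConnectedComponent.sound (hreachR _ v rfl (not_lt.mp hv)))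
  · ext v
    simp only [ConnectedComponent.mem_supp_iff, Set.mem_setOf_eq, hm]
    constructor
    · intro h
      by_contra hge
      push_neg at hge
      exact hnocross vi v (ConnectedComponent.exact h).symm hlt hge
    · intro h
      exact ConnectedComponent.sound ((hreachL _ v rfl h).trans (hreachL _ vi rfl hlt).symm)
  · ext v
    simp only [ConnectedComponent.mem_supp_iff, Set.mem_setOf_eq, hm]
    constructor
    · intro h
      by_contra hge
      push_neg at hge
      exact hnocross v vj (ConnectedComponent.exact h) hge (le_refl _)
    · intro h
      exact ConnectedComponent.sound (hreachR _ v rfl h)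

end AuxLemmas

theorem vertex_sets_after_breaking_longest_mst_edge {V : Type*} [Fintype V] (G T : SimpleGraph V) (w : Sym2 V → ℝ)
    (hconn : G.Connected) (hdistinct : Set.InjOn w G.edgeSet)
    (hT : IsMSTOn G w Set.univ T) (v₀ : V) (P : V → ℕ)
    (hP : IsPrimOrderOn G w Set.univ v₀ P)
    (vi vj : V) (hmem : s(vi, vj) ∈ T.edgeSet)
    (hmax : ∀ e ∈ T.edgeSet, w e ≤ w s(vi, vj)) :
    ∃ cL cR : (T.deleteEdges {s(vi, vj)}).ConnectedComponent,
      cL ≠ cR ∧ (∀ c, c = cL ∨ c = cR) ∧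
      cL.supp = {v | P v < edgeOrder P s(vi, vj)} ∧
      cR.supp = {v | edgeOrder P s(vi, vj) ≤ P v} := by
  have hTadj : T.Adj vi vj := hmem
  rcases lt_trichotomy (P vi) (P vj) with h | h | h
  · exact main_aux G T w hconn hdistinct hT v₀ P hP vi vj hmem hmax h
  · exact absurd (hP.2.2.1.injOn trivial trivial h) hTadj.ne
  · rw [show (s(vi, vj) : Sym2 V) = s(vj, vi) from Sym2.eq_swap]
    exact main_aux G T w hconn hdistinct hT v₀ P hP vj vi
      (by rwa [show (s(vj, vi) : Sym2 V) = s(vi, vj) from Sym2.eq_swap])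
      (by intro e he
          rw [show (s(vj, vi) : Sym2 V) = s(vi, vj) from Sym2.eq_swap]
          exact hmax e he) h
end

section
/- Let G be a finite connected simple graph with real edge weights, let T be its (unique) minimum spanning tree under the assumption of pairwise distinct weights, and let P be a Prim order of G with an arbitrary seed vertex v₀. Let e_max be the edge of T of maximum weight, and let T_L and T_R denote the two connected components of T − e_max, with vertex sets V_L and V_R, where the seed vertex v₀ lies in V_L and v_j denotes the endpoint of e_max lying in V_R. Then: (i) the restriction of P to V_L is a Prim order of T_L with seed v₀ (after identifying the positions {1, …, |V_L|}); and (ii) the map v ↦ P(v) − P(v_j) + 1 on V_R is a Prim order of T_R with seed v_j. -/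
open SimpleGraph

variable {V : Type*}

lemma walk_cross {H : SimpleGraph V} {A : Set V} :
    ∀ {a b : V}, H.Walk a b → a ∈ A → b ∉ A →
      ∃ x ∈ A, ∃ y, y ∉ A ∧ H.Adj x y := by
  intro a b p
  induction p with
  | nil => intro ha hb; exact absurd ha hb
  | @cons a c b h q ih =>
    intro ha hb
    by_cases hc : c ∈ A
    · exact ih hc hb
    · exact ⟨a, ha, c, hc, h⟩

lemma reach_transfer {H : SimpleGraph V} {x y : V} :
    ∀ {a b : V}, H.Walk a b →
      ((H.deleteEdges {s(x, y)}).Reachable b x ∨ (H.deleteEdges {s(x, y)}).Reachable b y) →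
      ((H.deleteEdges {s(x, y)}).Reachable a x ∨ (H.deleteEdges {s(x, y)}).Reachable a y) := by
  intro a b p
  induction p with
  | nil => exact id
  | @cons a c b h q ih =>
    intro hb
    have hc := ih hb
    by_cases he : s(a, c) = s(x, y)
    · rcases Sym2.eq_iff.mp he with ⟨rfl, rfl⟩ | ⟨rfl, rfl⟩
      · exact Or.inl (Reachable.refl _)
      · exact Or.inr (Reachable.refl _)
    · have hadj : (H.deleteEdges {s(x, y)}).Adj a c := by
        rw [deleteEdges_adj]
        exact ⟨h, by simpa using he⟩
      rcases hc with hc | hc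
      · exact Or.inl (hadj.reachable.trans hc)
      · exact Or.inr (hadj.reachable.trans hc)

lemma path_cross {T : SimpleGraph V} {A : Set V} :
    ∀ {a b : V} (p : T.Walk a b), p.IsPath → a ∈ A → b ∉ A →
      ∃ x ∈ A, ∃ y, y ∉ A ∧ T.Adj x y ∧
        (T.deleteEdges {s(x, y)}).Reachable a x ∧
        (T.deleteEdges {s(x, y)}).Reachable y b ∧ s(x, y) ∈ p.edges := by
  intro a b p
  induction p with
  | nil => intro _ ha hb; exact absurd ha hb
  | @cons a c b h q ih =>
    intro hp ha hb
    have hq : q.IsPath := hp.of_cons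
    have hnotin : s(a, c) ∉ q.edges := by
      have := hp.edges_nodup
      rw [SimpleGraph.Walk.edges_cons] at this
      exact (List.nodup_cons.mp this).1
    by_cases hc : c ∈ A
    · obtain ⟨x, hx, y, hy, hadj, hr1, hr2, hmemq⟩ := ih hq hc hb
      have hne : s(a, c) ≠ s(x, y) := fun hh => hnotin (hh ▸ hmemq)
      have hadj' : (T.deleteEdges {s(x, y)}).Adj a c := by
        rw [deleteEdges_adj]; exact ⟨h, by simpa using hne⟩
      exact ⟨x, hx, y, hy, hadj, hadj'.reachable.trans hr1, hr2,
        List.mem_cons_of_mem _ hmemq⟩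
    · refine ⟨a, ha, c, hc, h, Reachable.refl _, ?_, List.mem_cons_self⟩
      refine ⟨q.toDeleteEdges {s(a, c)} ?_⟩
      intro e he
      simp only [Set.mem_singleton_iff]
      exact fun hh => hnotin (hh ▸ he)

/-- Cut property: the minimum-weight edge across any cut belongs to the MST. -/
lemma cut_mem [Fintype V] {G T : SimpleGraph V} {w : Sym2 V → ℝ}
    (hdistinct : Set.InjOn w G.edgeSet) (hT : IsMSTOn G w Set.univ T)
    {A : Set V} {u v : V} (hu : u ∈ A) (hv : v ∉ A) (huv : G.Adj u v)
    (hmin : ∀ x ∈ A, ∀ y, y ∉ A → G.Adj x y → w s(u, v) ≤ w s(x, y)) :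
    T.Adj u v := by
  classical
  by_contra hnadj
  obtain ⟨hle, ⟨-, hreach, hacyc⟩, hopt⟩ := hT
  obtain ⟨q⟩ := hreach u trivial v trivial
  obtain ⟨x, hx, y, hy, hadj, hr1, hr2, -⟩ := path_cross q.bypass q.bypass_isPath hu hv
  have hfT : s(x, y) ∈ T.edgeSet := (mem_edgeSet _).mpr hadj
  have hfG : s(x, y) ∈ G.edgeSet := (mem_edgeSet _).mpr (hle hadj)
  have huvG : s(u, v) ∈ G.edgeSet := (mem_edgeSet _).mpr huv
  have hfne : s(u, v) ≠ s(x, y) := fun h => hnadj ((mem_edgeSet _).mp (h ▸ hfT))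
  have hwlt : w s(u, v) < w s(x, y) :=
    lt_of_le_of_ne (hmin x hx y hy (hle hadj)) fun h => hfne (hdistinct huvG hfG h)
  have hbrT : ¬ (T \ fromEdgeSet {s(x, y)}).Reachable x y :=
    (isBridge_iff.mp ((isAcyclic_iff_forall_adj_isBridge.mp hacyc) hadj))
  have hbrT' : ¬ (T.deleteEdges {s(x, y)}).Reachable x y := hbrT
  set D := T.deleteEdges {s(x, y)} with hD
  set T' := D ⊔ fromEdgeSet {s(u, v)} with hT'def
  have hDle : D ≤ T' := le_sup_left
  have hT'uv : T'.Adj u v := Or.inr ((fromEdgeSet_adj _).mpr ⟨rfl, huv.ne⟩)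
  have hT'le : T' ≤ G := by
    refine sup_le ((deleteEdges_le _).trans hle) ?_
    intro a b hab
    obtain ⟨hab1, -⟩ := (fromEdgeSet_adj _).mp hab
    rcases Sym2.eq_iff.mp (Set.mem_singleton_iff.mp hab1) with ⟨rfl, rfl⟩ | ⟨rfl, rfl⟩
    · exact huv
    · exact huv.symm
  -- every vertex reaches x or y in D
  have hall : ∀ a : V, D.Reachable a x ∨ D.Reachable a y := by
    intro a
    obtain ⟨p⟩ := hreach a trivial x trivial
    exact reach_transfer p (Or.inl (Reachable.refl x))
  have hxy' : T'.Reachable x y :=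
    ((hr1.mono hDle).symm.trans (hT'uv.reachable.trans (hr2.mono hDle).symm))
  have hax : ∀ a : V, T'.Reachable a x := fun a =>
    (hall a).elim (fun h => h.mono hDle) fun h => (h.mono hDle).trans hxy'.symm
  have hpre : ∀ a b : V, T'.Reachable a b := fun a b => (hax a).trans (hax b).symm
  -- removing s(u,v) from T' gives back D
  have hback : T' \ fromEdgeSet {s(u, v)} = D := by
    ext a b
    simp only [sdiff_adj, sup_adj, fromEdgeSet_adj, Set.mem_singleton_iff]
    constructor
    · rintro ⟨h1 | h1, h2⟩
      · exact h1
      · exact absurd h1 h2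
    · intro h1
      refine ⟨Or.inl h1, ?_⟩
      rintro ⟨heq, -⟩
      exact hnadj ((mem_edgeSet _).mp (heq ▸ (mem_edgeSet _).mpr h1.1))
  have hbr' : T'.IsBridge s(u, v) := by
    rw [isBridge_iff]
    change ¬ (T' \ fromEdgeSet {s(u, v)}).Reachable u v
    rw [hback]
    exact fun h => hbrT' (hr1.symm.trans (h.trans hr2.symm))
  have hacyc' : T'.IsAcyclic := by
    intro a c hc
    by_cases hmemc : s(u, v) ∈ c.edges
    · exact hbr'.notMem_edges_of_isCycle hc hmemc
    · have hsub : ∀ e ∈ c.edges, e ∈ T.edgeSet := by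
        intro e he
        have := c.edges_subset_edgeSet he
        rw [hT'def, edgeSet_sup, edgeSet_fromEdgeSet] at this
        rcases this with h1 | h1
        · rw [hD, edgeSet_deleteEdges] at h1
          exact h1.1
        · exact absurd ((Set.mem_singleton_iff.mp h1.1) ▸ he) hmemc
      exact hacyc (c.transfer T hsub) (hc.transfer hsub)
  -- weight comparison
  have hset : T'.edgeSet = insert s(u, v) (T.edgeSet \ {s(x, y)}) := by
    rw [hT'def, edgeSet_sup, edgeSet_fromEdgeSet, hD, edgeSet_deleteEdges]
    ext e
    simp only [Set.mem_union, Set.mem_diff, Set.mem_singleton_iff, Set.mem_insert_iff,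
      Set.mem_setOf_eq]
    constructor
    · rintro (h1 | h1)
      · exact Or.inr h1
      · exact Or.inl h1.1
    · rintro (rfl | h1)
      · exact Or.inr ⟨rfl, by simpa using huv.ne⟩
      · exact Or.inl h1
  have hFeq : T'.edgeSet.toFinite.toFinset
      = insert s(u, v) ((T.edgeSet.toFinite.toFinset).erase s(x, y)) := by
    ext e
    simp only [Set.Finite.mem_toFinset, hset, Set.mem_insert_iff, Set.mem_diff,
      Set.mem_singleton_iff, Finset.mem_insert, Finset.mem_erase, Set.Finite.mem_toFinset]
    tauto
  have hfF : s(x, y) ∈ T.edgeSet.toFinite.toFinset := by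
    rw [Set.Finite.mem_toFinset]; exact hfT
  have huvF : s(u, v) ∉ (T.edgeSet.toFinite.toFinset).erase s(x, y) := by
    intro h
    have := Finset.mem_of_mem_erase h
    rw [Set.Finite.mem_toFinset] at this
    exact hnadj ((mem_edgeSet _).mp this)
  have hwT' : totalWeight T' w = w s(u, v) + (totalWeight T w - w s(x, y)) := by
    rw [totalWeight, hFeq, Finset.sum_insert huvF, Finset.sum_erase_eq_sub hfF]
    rfl
  have hleopt := hopt T' hT'le ⟨fun _ _ _ _ => trivial, fun a _ b _ => hpre a b, hacyc'⟩
  rw [hwT'] at hleopt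
  linarith
theorem prim_orders_of_subtrees_after_breaking_longest_edge {V : Type*} [Fintype V] (G T : SimpleGraph V) (w : Sym2 V → ℝ)
    (hconn : G.Connected) (hdistinct : Set.InjOn w G.edgeSet)
    (hT : IsMSTOn G w Set.univ T) (v₀ : V) (P : V → ℕ)
    (hP : IsPrimOrderOn G w Set.univ v₀ P)
    (vi vj : V) (hmem : s(vi, vj) ∈ T.edgeSet)
    (hmax : ∀ e ∈ T.edgeSet, w e ≤ w s(vi, vj))
    (hseed : ¬ (T.deleteEdges {s(vi, vj)}).Reachable v₀ vj) :
    IsPrimOrderOn (T.deleteEdges {s(vi, vj)}) w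
      ((T.deleteEdges {s(vi, vj)}).connectedComponentMk v₀).supp v₀ P ∧
    IsPrimOrderOn (T.deleteEdges {s(vi, vj)}) w
      ((T.deleteEdges {s(vi, vj)}).connectedComponentMk vj).supp vj
      (fun v => P v - P vj + 1) := by
  classical
  obtain ⟨-, hP1, hPbij, hPmin⟩ := hP
  have hle : T ≤ G := hT.1
  have hreach : ∀ u ∈ (Set.univ : Set V), ∀ v ∈ (Set.univ : Set V), T.Reachable u v :=
    hT.2.1.2.1
  have hacyc : T.IsAcyclic := hT.2.1.2.2
  set D := T.deleteEdges {s(vi, vj)} with hD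
  set L := (D.connectedComponentMk v₀).supp with hL
  set R := (D.connectedComponentMk vj).supp with hR
  have hTadj : T.Adj vi vj := (mem_edgeSet _).mp hmem
  have hvivj : vi ≠ vj := hTadj.ne
  have hLiff : ∀ a, a ∈ L ↔ D.Reachable a v₀ := by
    intro a
    rw [hL, ConnectedComponent.mem_supp_iff, ConnectedComponent.eq]
  have hRiff : ∀ a, a ∈ R ↔ D.Reachable a vj := by
    intro a
    rw [hR, ConnectedComponent.mem_supp_iff, ConnectedComponent.eq]
  have hbr : ¬ D.Reachable vi vj :=
    (isBridge_iff.mp ((isAcyclic_iff_forall_adj_isBridge.mp hacyc) hTadj))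
  have hpart : ∀ a, D.Reachable a vi ∨ D.Reachable a vj := by
    intro a
    obtain ⟨p⟩ := hreach a trivial vi trivial
    exact reach_transfer p (Or.inl (Reachable.refl vi))
  have hv0vi : D.Reachable v₀ vi := (hpart v₀).resolve_right hseed
  have hcover : ∀ a, a ∈ L ∨ a ∈ R := by
    intro a
    rcases hpart a with h | h
    · exact Or.inl ((hLiff a).mpr (h.trans hv0vi.symm))
    · exact Or.inr ((hRiff a).mpr h)
  have hdisj : ∀ a, a ∈ L → a ∈ R → False := by
    intro a h1 h2
    exact hseed (((hLiff a).mp h1).symm.trans ((hRiff a).mp h2))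
  have hv0L : v₀ ∈ L := (hLiff v₀).mpr (Reachable.refl v₀)
  have hviL : vi ∈ L := (hLiff vi).mpr hv0vi.symm
  have hvjR : vj ∈ R := (hRiff vj).mpr (Reachable.refl vj)
  have hv0vj : v₀ ≠ vj := fun h => hdisj v₀ hv0L (h ▸ hvjR)
  set N := (Set.univ : Set V).ncard with hN
  have hPinj : ∀ a b : V, P a = P b → a = b := fun a b h =>
    hPbij.injOn trivial trivial h
  have hPrange : ∀ a : V, 1 ≤ P a ∧ P a ≤ N := by
    intro a
    have := hPbij.mapsTo (Set.mem_univ a)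
    rwa [Set.mem_Icc] at this
  have hPsurj : ∀ k, 1 ≤ k → k ≤ N → ∃ a : V, P a = k := by
    intro k h1 h2
    obtain ⟨a, -, ha⟩ := hPbij.surjOn (Set.mem_Icc.mpr ⟨h1, h2⟩)
    exact ⟨a, ha⟩
  set m := P vj with hm
  have hm1 : m ≠ 1 := fun h => hv0vj (hPinj v₀ vj (by rw [hP1, ← hm, h]))
  have hmN : 1 ≤ m ∧ m ≤ N := hPrange vj
  -- cut corollary of Prim property
  have hcut : ∀ v : V, P v ≠ 1 → ∃ u, P u < P v ∧ T.Adj u v ∧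
      ∀ x y : V, P x < P v → P v ≤ P y → G.Adj x y → w s(u, v) ≤ w s(x, y) := by
    intro v hv
    obtain ⟨u, -, hul, hadj, hmin⟩ := hPmin v trivial hv
    refine ⟨u, hul, ?_, fun x y hx hy hxy => hmin x trivial y trivial hx hy hxy⟩
    refine cut_mem hdistinct hT (A := {x : V | P x < P v}) hul (by simp) hadj ?_
    intro x hx y hy hxy
    exact hmin x trivial y trivial hx (le_of_not_gt hy) hxy
  -- every vertex of R has order at least m
  have step1 : ∀ k, ∀ v : V, P v = k → v ∈ R → m ≤ P v := by
    intro k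
    induction k using Nat.strong_induction_on with
    | _ k ih =>
      intro v hPv hvR
      by_contra hlt
      push_neg at hlt
      have hvne1 : P v ≠ 1 := by
        intro h
        exact hdisj v₀ hv0L ((hPinj v v₀ (by rw [h, hP1])) ▸ hvR)
      obtain ⟨u, hul, hTadj', -⟩ := hcut v hvne1
      by_cases he : s(u, v) = s(vi, vj)
      · rcases Sym2.eq_iff.mp he with ⟨rfl, rfl⟩ | ⟨rfl, rfl⟩
        · omega
        · exact hdisj v hviL hvR
      · have hDadj : D.Adj u v := by
          rw [hD, deleteEdges_adj]; exact ⟨hTadj', by simpa using he⟩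
        have huR : u ∈ R := (hRiff u).mpr (hDadj.reachable.trans ((hRiff v).mp hvR))
        have := ih (P u) (by omega) u rfl huR
        omega
  have step1' : ∀ v ∈ R, m ≤ P v := fun v hv => step1 (P v) v rfl hv
  -- the vertex joining vj must be vi, and every vertex of L has order below m
  obtain ⟨uj, hujlt, hujT, hujmin⟩ := hcut vj hm1
  have hujL : uj ∈ L := by
    rcases hcover uj with h | h
    · exact h
    · exact absurd (step1' uj h) (by omega)
  have hujvi : uj = vi := by
    by_cases he : s(uj, vj) = s(vi, vj)
    · rcases Sym2.eq_iff.mp he with ⟨h1, -⟩ | ⟨h1, h2⟩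
      · exact h1
      · exact absurd h2.symm hvivj
    · have hDadj : D.Adj uj vj := by
        rw [hD, deleteEdges_adj]; exact ⟨hujT, by simpa using he⟩
      exact absurd ((hRiff uj).mpr hDadj.reachable) fun h => hdisj uj hujL h
  rw [hujvi] at hujmin
  have step2 : ∀ v ∈ L, P v < m := by
    by_contra hcon
    push_neg at hcon
    obtain ⟨v, hvL, hge⟩ := hcon
    have hv0A : v₀ ∈ {x : V | P x < m} := by
      simp only [Set.mem_setOf_eq, hP1]; omega
    obtain ⟨p⟩ := ((hLiff v).mp hvL).symm
    obtain ⟨x, hx, y, hy, hDxy⟩ :=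
      walk_cross (A := {x : V | P x < m}) p hv0A (by simpa using hge)
    have hTxy : T.Adj x y := ((deleteEdges_adj).mp hDxy).1
    have h1 : w s(vi, vj) ≤ w s(x, y) :=
      hujmin x y hx (le_of_not_gt hy) (hle hTxy)
    have h2 : w s(x, y) ≤ w s(vi, vj) := hmax _ ((mem_edgeSet _).mpr hTxy)
    have heq : s(x, y) = s(vi, vj) :=
      hdistinct ((mem_edgeSet _).mpr (hle hTxy)) ((mem_edgeSet _).mpr (hle hTadj))
        (le_antisymm h2 h1)
    exact ((deleteEdges_adj).mp hDxy).2 (by simpa using heq)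
  have hLlt : ∀ v : V, v ∈ L ↔ P v < m := by
    intro v
    constructor
    · exact step2 v
    · intro h
      rcases hcover v with h1 | h1
      · exact h1
      · exact absurd (step1' v h1) (by omega)
  have hRge : ∀ v : V, v ∈ R ↔ m ≤ P v := by
    intro v
    constructor
    · exact step1' v
    · intro h
      rcases hcover v with h1 | h1
      · exact absurd ((hLlt v).mp h1) (by omega)
      · exact h1
  -- bijectivity facts
  have hbijL : Set.BijOn P L (Set.Icc 1 (m - 1)) := by
    refine ⟨?_, fun a _ b _ h => hPinj a b h, ?_⟩
    · intro v hv
      have h1 := hPrange v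
      have h2 := (hLlt v).mp hv
      rw [Set.mem_Icc]; omega
    · intro k hk
      rw [Set.mem_Icc] at hk
      obtain ⟨v, hv⟩ := hPsurj k hk.1 (by omega)
      exact ⟨v, (hLlt v).mpr (by omega), hv⟩
  have hbijR : Set.BijOn (fun v => P v - m + 1) R (Set.Icc 1 (N - m + 1)) := by
    refine ⟨?_, ?_, ?_⟩
    · intro v hv
      have h1 := hPrange v
      have h2 := (hRge v).mp hv
      show P v - m + 1 ∈ Set.Icc 1 (N - m + 1)
      rw [Set.mem_Icc]; omega
    · intro a ha b hb h
      have h1 := (hRge a).mp ha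
      have h2 := (hRge b).mp hb
      have h' : P a - m + 1 = P b - m + 1 := h
      exact hPinj a b (by omega)
    · intro k hk
      rw [Set.mem_Icc] at hk
      obtain ⟨v, hv⟩ := hPsurj (k + m - 1) (by omega) (by omega)
      exact ⟨v, (hRge v).mpr (by omega), show P v - m + 1 = k by omega⟩
  have hIccCard : ∀ k : ℕ, (Set.Icc 1 k).ncard = k := by
    intro k
    rw [← Finset.coe_Icc, Set.ncard_coe_finset, Nat.card_Icc]
    omega
  have hLcard : L.ncard = m - 1 := by
    rw [← hIccCard (m - 1), ← hbijL.image_eq, Set.ncard_image_of_injOn hbijL.injOn]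
  have hRcard : R.ncard = N - m + 1 := by
    rw [← hIccCard (N - m + 1), ← hbijR.image_eq, Set.ncard_image_of_injOn hbijR.injOn]
  constructor
  · -- Prim order on L
    refine ⟨hv0L, hP1, by rw [hLcard]; exact hbijL, ?_⟩
    intro v hvL hv1
    obtain ⟨u, hul, hTadj', hmin'⟩ := hcut v hv1
    have hvlt : P v < m := (hLlt v).mp hvL
    have hDadj : D.Adj u v := by
      rw [hD, deleteEdges_adj]
      refine ⟨hTadj', ?_⟩
      simp only [Set.mem_singleton_iff]
      intro he
      rcases Sym2.eq_iff.mp he with ⟨rfl, rfl⟩ | ⟨rfl, rfl⟩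
      · omega
      · omega
    have huL : u ∈ L := (hLiff u).mpr (hDadj.reachable.trans ((hLiff v).mp hvL))
    exact ⟨u, huL, hul, hDadj, fun x _ y _ h1 h2 hxy =>
      hmin' x y h1 h2 (hle ((deleteEdges_adj).mp hxy).1)⟩
  · -- Prim order on R
    refine ⟨hvjR, show P vj - P vj + 1 = 1 by omega, by rw [hRcard]; exact hbijR, ?_⟩
    intro v hvR hv1
    have hvge : m ≤ P v := (hRge v).mp hvR
    have hvgt : m < P v := by
      rcases lt_or_eq_of_le hvge with h | h
      · exact h
      · exact absurd (by omega : P v - m + 1 = 1) hv1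
    obtain ⟨u, hul, hTadj', hmin'⟩ := hcut v (by omega)
    have hDadj : D.Adj u v := by
      rw [hD, deleteEdges_adj]
      refine ⟨hTadj', ?_⟩
      simp only [Set.mem_singleton_iff]
      intro he
      rcases Sym2.eq_iff.mp he with ⟨rfl, rfl⟩ | ⟨rfl, rfl⟩
      · omega
      · exact hdisj v hviL hvR
    have huR : u ∈ R := (hRiff u).mpr (hDadj.reachable.trans ((hRiff v).mp hvR))
    have huge : m ≤ P u := (hRge u).mp huR
    refine ⟨u, huR, show P u - m + 1 < P v - m + 1 by omega, hDadj, ?_⟩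
    intro x hx y hy h1 h2 hxy
    have hxge : m ≤ P x := (hRge x).mp hx
    have hyge : m ≤ P y := (hRge y).mp hy
    have h1' : P x - m + 1 < P v - m + 1 := h1
    have h2' : P v - m + 1 ≤ P y - m + 1 := h2
    exact hmin' x y (by omega) (by omega) (hle ((deleteEdges_adj).mp hxy).1)
end

section
/- Let G be a finite connected simple graph with real edge weights (ties among edge weights allowed), and suppose a run of Prim's algorithm on G with an arbitrary seed vertex produces the Prim order P and the minimum spanning tree T with edge set E_T. Let E_max ⊆ E_T be the set of edges of T whose weight equals the maximum edge weight in T, and let e_max = (v_i, v_j) be the element of E_max with the largest Prim order P(e_max) = max(P(v_i), P(v_j)). Then deleting e_max from T leaves exactly two connected components T_L and T_R, and their edge sets are E_L = {e ∈ E_T : P(e) < P(e_max)} and E_R = {e ∈ E_T : P(e) > P(e_max)}. -/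
open SimpleGraph

variable {V : Type*}

theorem edge_sets_after_breaking_longest_edge_with_largest_prim_order {V : Type*} [Fintype V] (G T : SimpleGraph V) (w : Sym2 V → ℝ)
    (hconn : G.Connected) (v₀ : V) (P : V → ℕ) (c : V → V)
    (hP : IsPrimOrderOn G w Set.univ v₀ P)
    (hc : ∀ v : V, P v ≠ 1 → P (c v) < P v ∧ G.Adj (c v) v ∧
      ∀ x y : V, P x < P v → P v ≤ P y → G.Adj x y → w s(c v, v) ≤ w s(x, y))
    (hTedges : T.edgeSet = {e | ∃ v, P v ≠ 1 ∧ e = s(c v, v)})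
    (vi vj : V) (hmem : s(vi, vj) ∈ T.edgeSet)
    (hmax : ∀ e ∈ T.edgeSet, w e ≤ w s(vi, vj))
    (hlargest : ∀ e ∈ T.edgeSet, w e = w s(vi, vj) → edgeOrder P e ≤ edgeOrder P s(vi, vj)) :
    ∃ cL cR : (T.deleteEdges {s(vi, vj)}).ConnectedComponent,
      cL ≠ cR ∧ (∀ cc, cc = cL ∨ cc = cR) ∧
      (restrictTo (T.deleteEdges {s(vi, vj)}) cL.supp).edgeSet
        = {e ∈ T.edgeSet | edgeOrder P e < edgeOrder P s(vi, vj)} ∧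
      (restrictTo (T.deleteEdges {s(vi, vj)}) cR.supp).edgeSet
        = {e ∈ T.edgeSet | edgeOrder P s(vi, vj) < edgeOrder P e} := by
  obtain ⟨-, hPv₀, hbij, -⟩ := hP
  have Pinj : Function.Injective P := fun a b h =>
    hbij.injOn (Set.mem_univ a) (Set.mem_univ b) h
  have Pge : ∀ v, 1 ≤ P v := fun v => (hbij.mapsTo (Set.mem_univ v)).1
  have hEO : ∀ a b : V, edgeOrder P s(a, b) = max (P a) (P b) := fun a b => rfl
  -- extract the top vertex vs of the max edge
  have hvs0 : s(vi, vj) ∈ {e | ∃ v, P v ≠ 1 ∧ e = s(c v, v)} := hTedges ▸ hmem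
  obtain ⟨vs, hvs1, hvse⟩ := hvs0
  set K := P vs with hKdef
  have hcvs := hc vs hvs1
  have hKedge : edgeOrder P s(vi, vj) = K := by
    rw [hvse, hEO]; exact max_eq_right hcvs.1.le
  have hK2 : 2 ≤ K := by have := hcvs.1; have := Pge (c vs); omega
  have hEOv : ∀ v, P v ≠ 1 → edgeOrder P s(c v, v) = P v := by
    intro v hv1; rw [hEO]; exact max_eq_right (hc v hv1).1.le
  -- key lemma: parents of late vertices are late
  have hkey : ∀ v, P v ≠ 1 → v ≠ vs → K ≤ P v → K ≤ P (c v) := by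
    intro v hv1 hvvs hKv
    by_contra hlt
    push_neg at hlt
    have hKv' : K < P v := lt_of_le_of_ne hKv (fun h => hvvs (Pinj h.symm))
    obtain ⟨hcv, hadj, -⟩ := hc v hv1
    have h1 : w s(c vs, vs) ≤ w s(c v, v) := hcvs.2.2 (c v) v hlt hKv'.le hadj
    have hTe : s(c v, v) ∈ T.edgeSet := by rw [hTedges]; exact ⟨v, hv1, rfl⟩
    have h3 : w s(c v, v) = w s(vi, vj) := le_antisymm (hmax _ hTe) (hvse ▸ h1)
    have h4 := hlargest _ hTe h3
    rw [hKedge, hEOv v hv1] at h4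
    omega
  -- no surviving edge crosses the cut
  have hcross : ∀ a b : V, (T.deleteEdges {s(vi, vj)}).Adj a b → (P a < K ↔ P b < K) := by
    intro a b hab
    rw [deleteEdges_adj] at hab
    obtain ⟨hT, hne⟩ := hab
    have hTe : s(a, b) ∈ {e | ∃ v, P v ≠ 1 ∧ e = s(c v, v)} := hTedges ▸ (mem_edgeSet T).mpr hT
    obtain ⟨v, hv1, hev⟩ := hTe
    have hvvs : v ≠ vs := by
      intro h
      exact hne (by rw [Set.mem_singleton_iff, hev, h, ← hvse])
    have hcv := (hc v hv1).1
    have hiff : P (c v) < K ↔ P v < K := by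
      constructor
      · intro h
        by_contra h'
        push_neg at h'
        exact absurd (hkey v hv1 hvvs h') (by omega)
      · intro h; omega
    rw [Sym2.eq_iff] at hev
    rcases hev with ⟨ha, hb⟩ | ⟨ha, hb⟩ <;> subst ha <;> subst hb
    · exact hiff
    · exact hiff.symm
  have hreach : ∀ {a b : V}, (T.deleteEdges {s(vi, vj)}).Reachable a b → (P a < K ↔ P b < K) := by
    intro a b h
    obtain ⟨p⟩ := h
    induction p with
    | nil => exact Iff.rfl
    | cons h _ ih => exact (hcross _ _ h).trans ih
  -- early vertices reach v₀
  have hreachL : ∀ n, ∀ v, P v = n → P v < K → (T.deleteEdges {s(vi, vj)}).Reachable v₀ v := by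
    intro n
    induction n using Nat.strong_induction_on with
    | _ n ih =>
      intro v hn hvK
      by_cases h1 : P v = 1
      · have : v₀ = v := Pinj (by rw [h1, hPv₀])
        rw [this]
      · obtain ⟨hcv, -, -⟩ := hc v h1
        have hTe : s(c v, v) ∈ T.edgeSet := by rw [hTedges]; exact ⟨v, h1, rfl⟩
        have hne : s(c v, v) ∉ ({s(vi, vj)} : Set (Sym2 V)) := by
          rw [Set.mem_singleton_iff]
          intro h
          have := congrArg (edgeOrder P) h
          rw [hEOv v h1, hKedge] at this
          omega
        have hadj : (T.deleteEdges {s(vi, vj)}).Adj (c v) v := by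
          rw [deleteEdges_adj]; exact ⟨hTe, hne⟩
        exact (ih (P (c v)) (by omega) (c v) rfl (by omega)).trans hadj.reachable
  -- late vertices reach vs
  have hreachR : ∀ n, ∀ v, P v = n → K ≤ P v → (T.deleteEdges {s(vi, vj)}).Reachable vs v := by
    intro n
    induction n using Nat.strong_induction_on with
    | _ n ih =>
      intro v hn hvK
      by_cases hvvs : v = vs
      · rw [hvvs]
      · have hKv : K < P v := lt_of_le_of_ne hvK (fun h => hvvs (Pinj h.symm))
        have h1 : P v ≠ 1 := by omega
        have hcvK : K ≤ P (c v) := hkey v h1 hvvs hvK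
        have hcv := (hc v h1).1
        have hTe : s(c v, v) ∈ T.edgeSet := by rw [hTedges]; exact ⟨v, h1, rfl⟩
        have hne : s(c v, v) ∉ ({s(vi, vj)} : Set (Sym2 V)) := by
          rw [Set.mem_singleton_iff]
          intro h
          have := congrArg (edgeOrder P) h
          rw [hEOv v h1, hKedge] at this
          omega
        have hadj : (T.deleteEdges {s(vi, vj)}).Adj (c v) v := by
          rw [deleteEdges_adj]; exact ⟨hTe, hne⟩
        exact (ih (P (c v)) (by omega) (c v) rfl hcvK).trans hadj.reachable
  set H := T.deleteEdges {s(vi, vj)} with hH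
  refine ⟨H.connectedComponentMk v₀, H.connectedComponentMk vs, ?_, ?_, ?_, ?_⟩
  · intro h
    have := hreach (ConnectedComponent.eq.mp h)
    rw [hPv₀] at this
    omega
  · intro cc
    refine ConnectedComponent.ind (fun v => ?_) cc
    by_cases h : P v < K
    · exact Or.inl (ConnectedComponent.sound (hreachL _ v rfl h).symm)
    · exact Or.inr (ConnectedComponent.sound (hreachR _ v rfl (by omega)).symm)
  · have hsuppL : ∀ a : V, a ∈ (H.connectedComponentMk v₀).supp ↔ P a < K := by
      intro a
      rw [ConnectedComponent.mem_supp_iff, ConnectedComponent.eq]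
      constructor
      · intro h
        have := hreach h
        rw [hPv₀] at this
        omega
      · intro h; exact (hreachL _ a rfl h).symm
    ext e
    induction e using Sym2.ind with
    | _ a b =>
      simp only [Set.mem_setOf_eq, SimpleGraph.mem_edgeSet, hKedge]
      constructor
      · rintro ⟨hadj, ha, hb⟩
        rw [deleteEdges_adj] at hadj
        refine ⟨hadj.1, ?_⟩
        rw [hEO]
        have h1 := (hsuppL a).mp ha
        have h2 := (hsuppL b).mp hb
        omega
      · rintro ⟨hTe, hlt⟩
        have hTe2 : s(a, b) ∈ {e | ∃ v, P v ≠ 1 ∧ e = s(c v, v)} := hTedges ▸ (mem_edgeSet T).mpr hTe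
        obtain ⟨v, hv1, hev⟩ := hTe2
        have hPvK : P v < K := by
          have := congrArg (edgeOrder P) hev
          rw [hEOv v hv1] at this
          omega
        have hcv := (hc v hv1).1
        have hne : s(a, b) ∉ ({s(vi, vj)} : Set (Sym2 V)) := by
          rw [Set.mem_singleton_iff, hev]
          intro h
          have := congrArg (edgeOrder P) h
          rw [hEOv v hv1, hKedge] at this
          omega
        have hadj : H.Adj a b := by
          rw [hH, deleteEdges_adj]
          exact ⟨hTe, hne⟩
        refine ⟨hadj, ?_, ?_⟩ <;> rw [hsuppL] <;>
          (rw [Sym2.eq_iff] at hev; rcases hev with ⟨h3, h4⟩ | ⟨h3, h4⟩ <;> subst h3 <;> subst h4 <;> omega)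
  · have hsuppR : ∀ a : V, a ∈ (H.connectedComponentMk vs).supp ↔ K ≤ P a := by
      intro a
      rw [ConnectedComponent.mem_supp_iff, ConnectedComponent.eq]
      constructor
      · intro h
        have := hreach h
        omega
      · intro h; exact (hreachR _ a rfl h).symm
    ext e
    induction e using Sym2.ind with
    | _ a b =>
      simp only [Set.mem_setOf_eq, SimpleGraph.mem_edgeSet, hKedge]
      constructor
      · rintro ⟨hadj, ha, hb⟩
        rw [hH, deleteEdges_adj] at hadj
        refine ⟨hadj.1, ?_⟩
        have h1 := (hsuppR a).mp ha
        have h2 := (hsuppR b).mp hb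
        have hTe : s(a, b) ∈ {e | ∃ v, P v ≠ 1 ∧ e = s(c v, v)} := hTedges ▸ (mem_edgeSet T).mpr hadj.1
        obtain ⟨v, hv1, hev⟩ := hTe
        have hcv := (hc v hv1).1
        have := congrArg (edgeOrder P) hev
        rw [hEOv v hv1] at this
        rw [hEO] at this ⊢
        rw [Sym2.eq_iff] at hev
        rcases hev with ⟨h3, h4⟩ | ⟨h3, h4⟩ <;> subst h3 <;> subst h4 <;> omega
      · rintro ⟨hTe, hlt⟩
        have hTe2 : s(a, b) ∈ {e | ∃ v, P v ≠ 1 ∧ e = s(c v, v)} := hTedges ▸ (mem_edgeSet T).mpr hTe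
        obtain ⟨v, hv1, hev⟩ := hTe2
        have hKPv : K < P v := by
          have := congrArg (edgeOrder P) hev
          rw [hEOv v hv1] at this
          omega
        have hvvs : v ≠ vs := by intro h; rw [h] at hKPv; omega
        have hcvK : K ≤ P (c v) := hkey v hv1 hvvs hKPv.le
        have hne : s(a, b) ∉ ({s(vi, vj)} : Set (Sym2 V)) := by
          rw [Set.mem_singleton_iff, hev]
          intro h
          have := congrArg (edgeOrder P) h
          rw [hEOv v hv1, hKedge] at this
          omega
        have hadj : H.Adj a b := by
          rw [hH, deleteEdges_adj]
          exact ⟨hTe, hne⟩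
        refine ⟨hadj, ?_, ?_⟩ <;> rw [hsuppR] <;>
          (rw [Sym2.eq_iff] at hev; rcases hev with ⟨h3, h4⟩ | ⟨h3, h4⟩ <;> subst h3 <;> subst h4 <;> omega)
end
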